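/- arXiv:1003.4919 — 5 statements merged into one kernel-verified Lean document; each statement's English description precedes it below -/
import Mathlib

section
/- Let p be a prime, and let d, m, n, e be positive integers with md ≥ ne. Let V be a finite d-dimensional vector space over GF(p^m) and W a finite e-dimensional vector space over GF(p^n), and let λ : V → W be a surjective homomorphism of additive groups. Then λ is GF(p^m)*-perfect nonlinear: for every α ∈ GF(p^m) with α ≠ 0 and α ≠ 1, and for every β ∈ W, the number of v ∈ V satisfying λ(α • v) − λ(v) = β equals p^(md − ne), i.e. equals |V|/|W|. -/
/-- A surjective additive-group homomorphism `f : V → W` (with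
`V` of dimension `d` over `GF(p^m)`, `W` of dimension `e` over `GF(p^n)`,
`md ≥ ne`) is `GF(p^m)*`-perfect nonlinear: each derivative fibre has exactly
`p^(md - ne) = |V|/|W|` elements. -/
theorem stmt_1 (p : ℕ) (hp : p.Prime) (d m n e : ℕ)
    (hd : 0 < d) (hm : 0 < m) (hn : 0 < n) (he : 0 < e)
    (hdim : n * e ≤ m * d)
    (K : Type*) [Field K] [Fintype K] (hK : Fintype.card K = p ^ m)
    (L : Type*) [Field L] [Fintype L] (hL : Fintype.card L = p ^ n)
    (V : Type*) [AddCommGroup V] [Module K V] [Fintype V]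
    (hV : Module.finrank K V = d)
    (W : Type*) [AddCommGroup W] [Module L W] [Fintype W]
    (hW : Module.finrank L W = e)
    (f : V →+ W) (hf : Function.Surjective f) :
    ∀ α : K, α ≠ 0 → α ≠ 1 → ∀ β : W,
      Nat.card {v : V | f (α • v) - f v = β} = p ^ (m * d - n * e) ∧
        Nat.card {v : V | f (α • v) - f v = β} = Fintype.card V / Fintype.card W := by
  intro α hα0 hα1 β
  -- cardinalities
  have hcV : Fintype.card V = p ^ (m * d) := by
    rw [Module.card_eq_pow_finrank (K := K) (V := V), hK, hV, ← pow_mul]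
  have hcW : Fintype.card W = p ^ (n * e) := by
    rw [Module.card_eq_pow_finrank (K := L) (V := W), hL, hW, ← pow_mul]
  -- the derivative map as an AddMonoidHom
  have hsub : (α - 1) ≠ 0 := sub_ne_zero.mpr hα1
  let g : V →+ W := f.comp ((LinearMap.lsmul K V (α - 1)).toAddMonoidHom)
  have hgapp : ∀ v : V, g v = f (α • v) - f v := by
    intro v
    simp only [g, AddMonoidHom.comp_apply, LinearMap.toAddMonoidHom_coe,
      LinearMap.lsmul_apply, sub_smul, one_smul]
    exact map_sub f _ _
  have hg' : ∀ v : V, g v = f ((α - 1) • v) := fun v => rfl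
  have hgs : Function.Surjective g := by
    intro w
    obtain ⟨v, hv⟩ := hf w
    exact ⟨(α - 1)⁻¹ • v, by
      rw [hg', smul_smul, mul_inv_cancel₀ hsub, one_smul, hv]⟩
  -- fibers of g have card = card ker g
  obtain ⟨v0, hv0⟩ := hgs β
  have hfib : Nat.card {v : V | f (α • v) - f v = β} = Nat.card (g.ker) := by
    apply Nat.card_congr
    refine Equiv.symm ⟨fun x => ⟨x.1 + v0, ?_⟩, fun x => ⟨x.1 - v0, ?_⟩, ?_, ?_⟩
    · have hx : g x.1 = 0 := x.2
      simp only [Set.mem_setOf_eq, ← hgapp, map_add, hx, hv0, zero_add]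
    · have hx : g x.1 = β := by rw [hgapp]; exact x.2
      simp [AddMonoidHom.mem_ker, map_sub, hx, hv0]
    · intro x; ext; simp
    · intro x; ext; simp
  have hker : Nat.card (g.ker) * Fintype.card W = Fintype.card V := by
    have h1 : Nat.card (V ⧸ g.ker) = Nat.card W :=
      Nat.card_congr (QuotientAddGroup.quotientKerEquivOfSurjective g hgs).toEquiv
    have h2 := AddSubgroup.card_eq_card_quotient_mul_card_addSubgroup g.ker
    rw [h1] at h2
    rw [← Nat.card_eq_fintype_card, ← Nat.card_eq_fintype_card, h2, mul_comm]
  have hcard : Nat.card {v : V | f (α • v) - f v = β} = p ^ (m * d - n * e) := by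
    rw [hfib]
    have : Nat.card (g.ker) * p ^ (n * e) = p ^ (m * d) := by rw [← hcW, ← hcV]; exact hker
    have hp' : p ^ (n * e) ≠ 0 := pow_ne_zero _ hp.pos.ne'
    have := this
    rw [← pow_sub_mul_pow p hdim] at this
    exact Nat.eq_of_mul_eq_mul_right (Nat.pos_of_ne_zero hp') this
  refine ⟨hcard, ?_⟩
  rw [hcard, hcV, hcW, Nat.pow_div hdim hp.pos]
end

section
/- Let m > 1 be an integer, let F be a finite field with 2^m elements, and let λ : F → F be a field automorphism of F. Then λ is (Fˣ, ·)-perfect nonlinear from F to F: for every α ∈ F with α ≠ 0 and α ≠ 1, and every β ∈ F, there exists exactly one x ∈ F such that λ(α · x) − λ(x) = β (equivalently, in characteristic 2, λ(α·x) + λ(x) = β). -/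
/-- Any field automorphism `λ` of a finite field `F` with `2 ^ m`
elements (`m > 1`) is `(Fˣ, ·)`-perfect nonlinear: for every `α ≠ 0, 1` and
every `β ∈ F` there is exactly one `x ∈ F` with `λ (α * x) - λ x = β`. -/
theorem stmt_8 (m : ℕ) (hm : 1 < m)
    (F : Type*) [Field F] [Fintype F] (hF : Fintype.card F = 2 ^ m)
    (lam : F ≃+* F) :
    ∀ α : F, α ≠ 0 → α ≠ 1 → ∀ β : F, ∃! x : F, lam (α * x) - lam x = β := by
  intro α hα0 hα1 β
  have hc : lam α - 1 ≠ 0 := by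
    intro h
    apply hα1
    have : lam α = lam 1 := by
      rw [map_one]; linear_combination h
    exact lam.injective this
  have key : ∀ x : F, lam (α * x) - lam x = (lam α - 1) * lam x := by
    intro x; rw [map_mul]; ring
  refine ⟨lam.symm (β / (lam α - 1)), ?_, ?_⟩
  · show _ = _; rw [key, RingEquiv.apply_symm_apply, mul_div_cancel₀ _ hc]
  · intro y hy
    rw [key] at hy
    have : lam y = β / (lam α - 1) := by
      field_simp at hy ⊢; linear_combination hy
    exact lam.injective (by rw [this, RingEquiv.apply_symm_apply])
end

section
/- Let m > 1 be an integer and F a finite field with 2^m elements. Let G be a subgroup of the group of units (ℤ/(2^m − 1)ℤ)ˣ such that for every i ∈ G with i ≠ 1, the element i − 1 is a unit of ℤ/(2^m − 1)ℤ. Let λ : F → F be a field automorphism of F. Then for every i ∈ G with i ≠ 1 (with natural-number representative a), and for every β ∈ Fˣ, there exists exactly one x ∈ Fˣ such that λ(x^a) · λ(x)⁻¹ = β. -/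
/-- Let `F` be a finite field with `2 ^ m` elements (`m > 1`) and
`G` a subgroup of `(ZMod (2 ^ m - 1))ˣ` such that `i - 1` is a unit of
`ZMod (2 ^ m - 1)` for every `i ∈ G`, `i ≠ 1`. For any field automorphism
`λ` of `F`, every `i ∈ G` with `i ≠ 1` (with natural representative `a`) and
every `β ∈ Fˣ`, there is exactly one `x ∈ Fˣ` with `λ (x ^ a) * (λ x)⁻¹ = β`. -/
theorem stmt_9 (m : ℕ) (hm : 1 < m)
    (F : Type*) [Field F] [Fintype F] (hF : Fintype.card F = 2 ^ m)
    (G : Subgroup (ZMod (2 ^ m - 1))ˣ)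
    (hG : ∀ i ∈ G, i ≠ 1 → IsUnit ((i : ZMod (2 ^ m - 1)) - 1))
    (lam : F ≃+* F) :
    ∀ i ∈ G, i ≠ 1 → ∀ β : Fˣ, ∃! x : Fˣ,
      lam ((x : F) ^ (i : ZMod (2 ^ m - 1)).val) * (lam (x : F))⁻¹ = (β : F) := by
  intro i hi hi1 β
  have hn2 : 2 ≤ 2 ^ m - 1 := by
    have : 4 ≤ 2 ^ m := by
      calc 4 = 2 ^ 2 := rfl
      _ ≤ 2 ^ m := Nat.pow_le_pow_right (by norm_num) hm
    omega
  haveI : NeZero (2 ^ m - 1) := ⟨by omega⟩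
  set a := (i : ZMod (2 ^ m - 1)).val with ha
  haveI : Nontrivial (ZMod (2 ^ m - 1)) := by
    haveI : Fact (1 < 2 ^ m - 1) := ⟨by omega⟩
    infer_instance
  have ha1 : 1 ≤ a := by
    rcases Nat.eq_zero_or_pos a with h0 | h
    · exfalso
      have h0' : (i : ZMod (2 ^ m - 1)) = 0 := by
        rwa [← ZMod.val_eq_zero]
      exact i.ne_zero h0'
    · exact h
  have hcardu : Nat.card Fˣ = 2 ^ m - 1 := by
    rw [Nat.card_units, Nat.card_eq_fintype_card, hF]
  have hcop : (Nat.card Fˣ).Coprime (a - 1) := by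
    have hu : IsUnit (((a - 1 : ℕ) : ZMod (2 ^ m - 1))) := by
      have := hG i hi hi1
      rwa [Nat.cast_sub ha1, Nat.cast_one, ha, ZMod.natCast_val, ZMod.cast_id]
    have hc := (ZMod.isUnit_iff_coprime _ _).mp hu
    rw [hcardu]
    exact hc.symm
  let e : Fˣ ≃ Fˣ := powCoprime hcop
  let β' : Fˣ := Units.map (lam.symm : F ≃+* F).toMonoidHom β
  have key : ∀ x : Fˣ,
      (lam ((x : F) ^ a) * (lam (x : F))⁻¹ = (β : F)) ↔ e x = β' := by
    intro x
    have hx0 : (x : F) ≠ 0 := x.ne_zero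
    have hpow : (x : F) ^ a * ((x : F))⁻¹ = (x : F) ^ (a - 1) := by
      rw [pow_sub₀ (x : F) hx0 ha1, pow_one]
    rw [← map_inv₀ lam, ← map_mul, hpow]
    constructor
    · intro h
      have h2 : (x : F) ^ (a - 1) = lam.symm (β : F) := by
        rw [← h, RingEquiv.symm_apply_apply]
      apply Units.ext
      show ((x ^ (a - 1) : Fˣ) : F) = (β' : F)
      rw [Units.val_pow_eq_pow_val]
      exact h2
    · intro h
      have h2 : ((x ^ (a - 1) : Fˣ) : F) = (β' : F) := congrArg Units.val h
      rw [Units.val_pow_eq_pow_val] at h2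
      have : (x : F) ^ (a - 1) = lam.symm (β : F) := h2
      rw [this, RingEquiv.apply_symm_apply]
  refine ⟨e.symm β', ?_, ?_⟩
  · exact (key _).mpr (e.apply_symm_apply β')
  · intro y hy
    rw [key] at hy
    exact e.injective (hy.trans (e.apply_symm_apply β').symm)
end

section
/- Let q be a prime such that p = 2^q − 1 is a (Mersenne) prime, let F be a finite field with 2^q elements, and let 0 ≤ r ≤ q − 1. Let λ : F → F be the r-th power of the Frobenius automorphism, λ(x) = x^(2^r). Then λ is (Fˣ, ·)-perfect nonlinear: for every α ∈ F with α ≠ 0 and α ≠ 1, and every β ∈ F, there exists exactly one x ∈ F such that (α · x)^(2^r) + x^(2^r) = β. -/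
/-- Let `q` be a prime with `2 ^ q - 1` a (Mersenne) prime, `F`
a finite field with `2 ^ q` elements and `0 ≤ r ≤ q - 1`. The `r`-th power of
the Frobenius, `λ(x) = x ^ (2 ^ r)`, is `(Fˣ, ·)`-perfect nonlinear: for every
`α ≠ 0, 1` and every `β ∈ F` there is exactly one `x ∈ F` with
`(α * x) ^ (2 ^ r) + x ^ (2 ^ r) = β`. -/
theorem stmt_10 (q : ℕ) (hq : q.Prime) (hmersenne : (2 ^ q - 1).Prime)
    (F : Type*) [Field F] [Fintype F] (hF : Fintype.card F = 2 ^ q)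
    (r : ℕ) (hr : r ≤ q - 1) :
    ∀ α : F, α ≠ 0 → α ≠ 1 → ∀ β : F,
      ∃! x : F, (α * x) ^ (2 ^ r) + x ^ (2 ^ r) = β := by
  have hchar : ringChar F = 2 := by
    rw [FiniteField.even_card_iff_char_two, hF]
    simp [Nat.pow_mod, hq.ne_zero]
  haveI : CharP F 2 := hchar ▸ ringChar.charP F
  haveI : Fact (Nat.Prime 2) := ⟨Nat.prime_two⟩
  -- the map x ↦ x ^ (2 ^ r) is bijective
  have hinj : Function.Injective (fun x : F => x ^ (2 ^ r)) := by
    have : (fun x : F => x ^ (2 ^ r)) = (frobenius F 2)^[r] := by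
      funext x
      rw [iterate_frobenius]
    rw [this]
    exact Function.Injective.iterate (frobenius F 2).injective r
  have hbij : Function.Bijective (fun x : F => x ^ (2 ^ r)) :=
    (Finite.injective_iff_bijective).mp hinj
  intro α hα0 hα1 β
  have hne : α ^ (2 ^ r) + 1 ≠ 0 := by
    intro h
    apply hα1
    have h2 : α ^ (2 ^ r) = 1 ^ (2 ^ r) := by
      rw [one_pow]
      have h' := eq_neg_of_add_eq_zero_left h
      rwa [CharTwo.neg_eq] at h'
    exact hinj h2
  obtain ⟨x, hx⟩ := hbij.surjective (β / (α ^ (2 ^ r) + 1))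
  simp only at hx
  have key : ∀ y : F, (α * y) ^ (2 ^ r) + y ^ (2 ^ r) = (α ^ (2 ^ r) + 1) * y ^ (2 ^ r) := by
    intro y; rw [mul_pow]; ring
  refine ⟨x, ?_, ?_⟩
  · show (α * x) ^ (2 ^ r) + x ^ (2 ^ r) = β
    rw [key, hx, mul_div_cancel₀ _ hne]
  · intro y hy
    apply hinj
    rw [key] at hy
    have : y ^ (2 ^ r) = β / (α ^ (2 ^ r) + 1) := by
      field_simp at hy ⊢
      linear_combination hy
    simp only [this, hx]
end

section
/- Let q be a prime such that p = 2^q − 1 is a (Mersenne) prime, let F be a finite field with 2^q elements, and let 0 ≤ r ≤ q − 1. Let λ(x) = x^(2^r) be the r-th power of the Frobenius automorphism. Then for every integer i with 2 ≤ i ≤ 2^q − 2, and every β ∈ Fˣ, there exists exactly one x ∈ Fˣ such that λ(x^i) · λ(x)⁻¹ = β, i.e. exactly one nonzero x with x^(i·2^r) · (x^(2^r))⁻¹ = β. Together with the (Fˣ, ·)-perfect nonlinearity of λ, this makes λ a doubly perfect nonlinear permutation of F. -/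
/-- Let `q` be a prime with `p = 2 ^ q - 1` a (Mersenne) prime,
`F` a finite field with `2 ^ q` elements, `0 ≤ r ≤ q - 1`, and
`λ(x) = x ^ (2 ^ r)` the `r`-th Frobenius power. Then for every `i` with
`2 ≤ i ≤ 2 ^ q - 2` and every `β ∈ Fˣ`, there is exactly one `x ∈ Fˣ` with
`λ(x ^ i) * (λ x)⁻¹ = β`, i.e. `x ^ (i * 2 ^ r) * (x ^ (2 ^ r))⁻¹ = β`.
Together with the `(Fˣ, ·)`-perfect nonlinearity of `λ` (first conjunct),
this makes `λ` a doubly perfect nonlinear permutation of `F`. -/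
theorem stmt_11 (q : ℕ) (hq : q.Prime) (hmersenne : (2 ^ q - 1).Prime)
    (F : Type*) [Field F] [Fintype F] (hF : Fintype.card F = 2 ^ q)
    (r : ℕ) (hr : r ≤ q - 1) :
    (∀ α : F, α ≠ 0 → α ≠ 1 → ∀ β : F,
        ∃! x : F, (α * x) ^ (2 ^ r) + x ^ (2 ^ r) = β) ∧
      (∀ i : ℕ, 2 ≤ i → i ≤ 2 ^ q - 2 → ∀ β : Fˣ,
        ∃! x : Fˣ, (x : F) ^ (i * 2 ^ r) * ((x : F) ^ (2 ^ r))⁻¹ = (β : F)) := by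
  haveI hchar : CharP F 2 := by
    have hp : (ringChar F).Prime := CharP.char_is_prime F (ringChar F)
    obtain ⟨n, -, hcard⟩ := FiniteField.card F (ringChar F)
    have hdvd : ringChar F ∣ 2 ^ q := by
      rw [hF] at hcard; exact hcard ▸ dvd_pow_self _ n.pos.ne'
    have : ringChar F = 2 :=
      ((Nat.prime_dvd_prime_iff_eq hp Nat.prime_two).mp (hp.dvd_of_dvd_pow hdvd))
    exact this ▸ ringChar.charP F
  constructor
  · -- additive part
    intro α hα0 hα1 β
    -- frobenius power is bijective
    have hfrob : Function.Bijective (fun x : F => x ^ (2 ^ r)) := by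
      refine Finite.injective_iff_bijective.mp ?_
      intro x y hxy
      have : (x - y) ^ (2 ^ r) = 0 := by
        rw [sub_pow_char_pow]
        simpa using sub_eq_zero_of_eq hxy
      have := pow_eq_zero_iff (pow_ne_zero r two_ne_zero) |>.mp this
      exact sub_eq_zero.mp this
    have hα1' : α + 1 ≠ 0 := by
      intro h
      apply hα1
      have := CharTwo.neg_eq (R := F) 1
      have : α = -1 := eq_neg_of_add_eq_zero_left h
      rw [this, CharTwo.neg_eq]
    have key : ∀ x : F, (α * x) ^ (2 ^ r) + x ^ (2 ^ r) = ((α + 1) * x) ^ (2 ^ r) := by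
      intro x
      rw [mul_pow, mul_pow, add_pow_char_pow, one_pow, add_mul, one_mul]
    obtain ⟨y, hy⟩ := hfrob.surjective β
    simp only at hy
    refine ⟨(α + 1)⁻¹ * y, ?_, ?_⟩
    · simp only [key, mul_inv_cancel_left₀ hα1', hy]
    · intro z hz
      simp only [key] at hz
      have h2 : (α + 1) * z = y := hfrob.injective (hz.trans hy.symm)
      field_simp
      rw [mul_comm, h2]
  · -- multiplicative part
    intro i hi2 hi ββ
    classical
    have hcard : Nat.card Fˣ = 2 ^ q - 1 := by
      rw [Nat.card_eq_fintype_card, Fintype.card_units, hF]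
    have hk : (Nat.card Fˣ).Coprime ((i - 1) * 2 ^ r) := by
      rw [hcard]
      refine Nat.Coprime.mul_right ?_ ?_
      · rw [hmersenne.coprime_iff_not_dvd]
        intro hdvd
        have h4 : 4 ≤ 2 ^ q := by
          calc 4 = 2 ^ 2 := rfl
          _ ≤ 2 ^ q := Nat.pow_le_pow_right (by norm_num) hq.two_le
        have := Nat.le_of_dvd (by omega) hdvd
        omega
      · refine Nat.Coprime.pow_right _ ?_
        refine (Nat.coprime_primes hmersenne Nat.prime_two).mpr ?_
        have h4 : 4 ≤ 2 ^ q := by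
          calc 4 = 2 ^ 2 := rfl
          _ ≤ 2 ^ q := Nat.pow_le_pow_right (by norm_num) hq.two_le
        omega
    have hb := (powCoprime hk).bijective
    obtain ⟨x, hx⟩ := hb.surjective ββ
    have hrw : ∀ z : Fˣ, (z : F) ^ (i * 2 ^ r) * ((z : F) ^ (2 ^ r))⁻¹
        = ((z ^ ((i - 1) * 2 ^ r) : Fˣ) : F) := by
      intro z
      push_cast
      have hle : 2 ^ r ≤ i * 2 ^ r := Nat.le_mul_of_pos_left (2 ^ r) (by omega)
      rw [Nat.sub_mul, one_mul, pow_sub₀ _ z.ne_zero hle]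
    refine ⟨x, ?_, ?_⟩
    · simp only [hrw]
      exact_mod_cast congrArg (Units.val) hx
    · intro z hz
      simp only [hrw] at hz
      have : z ^ ((i - 1) * 2 ^ r) = ββ := Units.ext hz
      exact hb.injective (by simpa [powCoprime] using this.trans hx.symm)
end
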